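/- Let B be standard Brownian motion, n = ab, r | b. If fine batch q of length b/r is not contained in coarse batch p of length b (i.e., q ∉ {rp,...,r(p+1)-1}), then Cov(B̄_p(b) - B̄, B̄_q(b/r) - B̄) = -1/n. -/

import Mathlib

open MeasureTheory ProbabilityTheory Real Set
open scoped NNReal ENNReal

lemma integral_sq_mul_gauss {b : ℝ} (hb : 0 < b) :
    ∫ x : ℝ, x ^ 2 * Real.exp (-b * x ^ 2) = Real.sqrt (π / b) / (2 * b) := by
  have hint2 : Integrable (fun x : ℝ => x ^ 2 * Real.exp (-b * x ^ 2)) := by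
    have h := integrable_rpow_mul_exp_neg_mul_sq hb (s := 2) (by norm_num)
    have h2 : ∀ x : ℝ, x ^ (2 : ℝ) = x ^ 2 := fun x => by
      rw [show (2:ℝ) = ((2:ℕ):ℝ) by norm_num, Real.rpow_natCast]
    simpa [h2] using h
  have hint0 : Integrable (fun x : ℝ => Real.exp (-b * x ^ 2)) := integrable_exp_neg_mul_sq hb
  have hf : Integrable (fun x : ℝ => x * Real.exp (-b * x ^ 2)) := integrable_mul_exp_neg_mul_sq hb
  have hf' : Integrable
      (fun x : ℝ => Real.exp (-b * x ^ 2) - 2 * b * (x ^ 2 * Real.exp (-b * x ^ 2))) :=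
    hint0.sub (hint2.const_mul _)
  have hderiv : ∀ x : ℝ, HasDerivAt (fun x : ℝ => x * Real.exp (-b * x ^ 2))
      (Real.exp (-b * x ^ 2) - 2 * b * (x ^ 2 * Real.exp (-b * x ^ 2))) x := by
    intro x
    have h1 : HasDerivAt (fun x : ℝ => -b * x ^ 2) (-b * (2 * x)) x := by
      simpa using (hasDerivAt_pow 2 x).const_mul (-b)
    have h3 := (hasDerivAt_id x).mul h1.exp
    refine h3.congr_deriv ?_
    simp only [id_eq]
    ring
  have h0 : ∫ x : ℝ, (Real.exp (-b * x ^ 2) - 2 * b * (x ^ 2 * Real.exp (-b * x ^ 2))) = 0 :=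
    integral_eq_zero_of_hasDerivAt_of_integrable hderiv hf' hf
  rw [integral_sub hint0 (hint2.const_mul _), integral_const_mul, integral_gaussian,
    sub_eq_zero] at h0
  have hb' : (2 : ℝ) * b ≠ 0 := by positivity
  rw [eq_div_iff hb']
  linear_combination (-1 : ℝ) * h0

lemma gaussianReal_sq (v : ℝ≥0) :
    Integrable (fun x : ℝ => x ^ 2) (gaussianReal 0 v) ∧
      ∫ x, x ^ 2 ∂(gaussianReal 0 v) = (v : ℝ) := by
  rcases eq_or_ne v 0 with rfl | hv
  · rw [gaussianReal_zero_var]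
    constructor
    · refine ⟨(measurable_id.pow_const 2).aestronglyMeasurable, ?_⟩
      simp [HasFiniteIntegral, lintegral_dirac]
    · simp [integral_dirac]
  · have hv0 : (0 : ℝ) < (v : ℝ) := by exact_mod_cast pos_iff_ne_zero.mpr hv
    set b : ℝ := (2 * (v : ℝ))⁻¹ with hbdef
    have hb : 0 < b := by positivity
    have hint2 : Integrable (fun x : ℝ => x ^ 2 * Real.exp (-b * x ^ 2)) := by
      have h := integrable_rpow_mul_exp_neg_mul_sq hb (s := 2) (by norm_num)
      have h2 : ∀ x : ℝ, x ^ (2 : ℝ) = x ^ 2 := fun x => by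
        rw [show (2:ℝ) = ((2:ℕ):ℝ) by norm_num, Real.rpow_natCast]
      simpa [h2] using h
    have hpdf_meas : Measurable fun x => (gaussianPDFReal 0 v x).toNNReal :=
      (measurable_gaussianPDFReal 0 v).real_toNNReal
    have hsm : ∀ x : ℝ, ((gaussianPDFReal 0 v x).toNNReal : ℝ≥0) • (x ^ 2 : ℝ)
        = (Real.sqrt (2 * π * v))⁻¹ * (x ^ 2 * Real.exp (-b * x ^ 2)) := by
      intro x
      rw [NNReal.smul_def, Real.coe_toNNReal _ (gaussianPDFReal_nonneg _ _ _), gaussianPDFReal]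
      have hx : -(x - 0) ^ 2 / (2 * (v : ℝ)) = -b * x ^ 2 := by
        rw [hbdef]
        field_simp
        ring
      rw [hx, smul_eq_mul]
      ring
    have hdens : gaussianReal 0 v
        = volume.withDensity (fun x => ((gaussianPDFReal 0 v x).toNNReal : ℝ≥0∞)) := by
      rw [gaussianReal_of_var_ne_zero 0 hv]
      rfl
    have hs : (0 : ℝ) < Real.sqrt (2 * π * v) := Real.sqrt_pos.mpr (by positivity)
    constructor
    · rw [hdens, integrable_withDensity_iff_integrable_smul hpdf_meas]
      exact (hint2.const_mul _).congr (Filter.Eventually.of_forall fun x => (hsm x).symm)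
    · rw [hdens, integral_withDensity_eq_integral_smul hpdf_meas]
      calc ∫ x, ((gaussianPDFReal 0 v x).toNNReal : ℝ≥0) • (x ^ 2 : ℝ)
          = ∫ x, (Real.sqrt (2 * π * v))⁻¹ * (x ^ 2 * Real.exp (-b * x ^ 2)) := by
            exact integral_congr_ae (Filter.Eventually.of_forall hsm)
        _ = (Real.sqrt (2 * π * v))⁻¹ * ∫ x, x ^ 2 * Real.exp (-b * x ^ 2) :=
            integral_const_mul _ _
        _ = (v : ℝ) := by
            rw [integral_sq_mul_gauss hb]
            have hpb : π / b = 2 * π * v := by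
              rw [hbdef]
              field_simp
            rw [hpb, hbdef]
            have h2v : (2:ℝ) * (2 * (v:ℝ))⁻¹ = ((v:ℝ))⁻¹ := by
              field_simp
            rw [h2v]
            field_simp

lemma bm_sq_moment {Ω : Type*} [MeasurableSpace Ω] (μ : Measure Ω)
    (B : ℝ → Ω → ℝ) (hmeas : ∀ t : ℝ, Measurable (B t))
    {m : ℕ} (t c : Fin m → ℝ)
    (hmap : Measure.map (fun ω => ∑ i, c i * B (t i) ω) μ =
      gaussianReal 0 (Real.toNNReal (∑ i, ∑ j, c i * c j * min (t i) (t j))))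
    (hS : 0 ≤ ∑ i, ∑ j, c i * c j * min (t i) (t j)) :
    Integrable (fun ω => (∑ i, c i * B (t i) ω) ^ 2) μ ∧
      ∫ ω, (∑ i, c i * B (t i) ω) ^ 2 ∂μ = ∑ i, ∑ j, c i * c j * min (t i) (t j) := by
  have hfm : Measurable fun ω => ∑ i, c i * B (t i) ω :=
    Finset.measurable_sum _ fun i _ => (hmeas (t i)).const_mul (c i)
  have hg : Measurable fun x : ℝ => x ^ 2 := measurable_id.pow_const 2
  obtain ⟨hI, hE⟩ := gaussianReal_sq (Real.toNNReal (∑ i, ∑ j, c i * c j * min (t i) (t j)))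
  constructor
  · have := (integrable_map_measure hg.aestronglyMeasurable hfm.aemeasurable).mp
      (by rw [hmap]; exact hI)
    exact this
  · calc ∫ ω, (∑ i, c i * B (t i) ω) ^ 2 ∂μ
        = ∫ x, x ^ 2 ∂(Measure.map (fun ω => ∑ i, c i * B (t i) ω) μ) :=
          (integral_map hfm.aemeasurable hg.aestronglyMeasurable).symm
      _ = _ := by rw [hmap, hE, Real.coe_toNNReal _ hS]

set_option maxHeartbeats 2000000 in
theorem batch_mean_cov_no_overlap {Ω : Type*} [MeasurableSpace Ω]
    (μ : Measure Ω) [IsProbabilityMeasure μ]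
    (B : ℝ → Ω → ℝ) (hmeas : ∀ t : ℝ, Measurable (B t))
    (hBM : ∀ (m : ℕ) (t c : Fin m → ℝ), (∀ i, 0 ≤ t i) →
      Measure.map (fun ω => ∑ i, c i * B (t i) ω) μ =
        gaussianReal 0 (Real.toNNReal (∑ i, ∑ j, c i * c j * min (t i) (t j))))
    (a r b' n p q : ℕ) (ha : 0 < a) (hr : 0 < r) (hb' : 0 < b')
    (hn : n = a * (r * b')) (hp : p < a) (hq : q < r * a)
    (hout : q < r * p ∨ r * (p + 1) ≤ q) :
    ∫ ω, ((B ((p * (r * b') + r * b' : ℕ) : ℝ) ω - B ((p * (r * b') : ℕ) : ℝ) ω)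
            / ((r * b' : ℕ) : ℝ) - B ((n : ℕ) : ℝ) ω / (n : ℝ))
        * ((B ((q * b' + b' : ℕ) : ℝ) ω - B ((q * b' : ℕ) : ℝ) ω) / (b' : ℝ)
            - B ((n : ℕ) : ℝ) ω / (n : ℝ)) ∂μ
      = -1 / (n : ℝ) := by
  subst hn
  have hb0 : (0:ℝ) < (b' : ℝ) := by exact_mod_cast hb'
  have hr0 : (0:ℝ) < (r : ℝ) := by exact_mod_cast hr
  have ha0 : (0:ℝ) < (a : ℝ) := by exact_mod_cast ha
  have hr1 : (1:ℝ) ≤ (r : ℝ) := by exact_mod_cast hr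
  have ha2 : (2:ℝ) ≤ (a : ℝ) := by
    have h2a : 2 ≤ a := by
      rcases hout with h | h
      · have hp0 : 0 < p := Nat.pos_of_ne_zero (by rintro rfl; omega)
        omega
      · have h1 : r * (p + 1) < r * a := lt_of_le_of_lt h hq
        have h2 : p + 1 < a := lt_of_mul_lt_mul_left h1 (Nat.zero_le r)
        omega
    exact_mod_cast h2a
  have hpa : (p:ℝ) + 1 ≤ (a:ℝ) := by exact_mod_cast hp
  have hqra : (q:ℝ) + 1 ≤ (r:ℝ) * (a:ℝ) := by exact_mod_cast hq
  set t : Fin 5 → ℝ := ![(p:ℝ) * ((r:ℝ) * (b':ℝ)), (p:ℝ) * ((r:ℝ) * (b':ℝ)) + (r:ℝ) * (b':ℝ),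
      (q:ℝ) * (b':ℝ), (q:ℝ) * (b':ℝ) + (b':ℝ), (a:ℝ) * ((r:ℝ) * (b':ℝ))] with ht_def
  set cplus : Fin 5 → ℝ := ![-(1/((r:ℝ) * (b':ℝ))), 1/((r:ℝ) * (b':ℝ)), -(1/(b':ℝ)), 1/(b':ℝ),
      -(2/((a:ℝ) * ((r:ℝ) * (b':ℝ))))] with hcp_def
  set cminus : Fin 5 → ℝ := ![-(1/((r:ℝ) * (b':ℝ))), 1/((r:ℝ) * (b':ℝ)), 1/(b':ℝ), -(1/(b':ℝ)),
      0] with hcm_def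
  have ht : ∀ i, 0 ≤ t i := by
    intro i
    fin_cases i <;> simp [ht_def] <;> positivity
  have key : ∀ (c : Fin 5 → ℝ), 0 ≤ ∑ i, ∑ j, c i * c j * min (t i) (t j) →
      Integrable (fun ω => (∑ i, c i * B (t i) ω) ^ 2) μ ∧
        ∫ ω, (∑ i, c i * B (t i) ω) ^ 2 ∂μ = ∑ i, ∑ j, c i * c j * min (t i) (t j) :=
    fun c hS => bm_sq_moment μ B hmeas t c (hBM 5 t c ht) hS
  have hpt : ∀ ω, ((B ((p * (r * b') + r * b' : ℕ) : ℝ) ω - B ((p * (r * b') : ℕ) : ℝ) ω)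
            / ((r * b' : ℕ) : ℝ) - B ((a * (r * b') : ℕ) : ℝ) ω / ((a * (r * b') : ℕ) : ℝ))
        * ((B ((q * b' + b' : ℕ) : ℝ) ω - B ((q * b' : ℕ) : ℝ) ω) / (b' : ℝ)
            - B ((a * (r * b') : ℕ) : ℝ) ω / ((a * (r * b') : ℕ) : ℝ))
      = ((∑ i, cplus i * B (t i) ω) ^ 2 - (∑ i, cminus i * B (t i) ω) ^ 2) / 4 := by
    intro ω
    simp only [hcp_def, hcm_def, ht_def, Fin.sum_univ_five, Matrix.cons_val_zero,
      Matrix.cons_val_one, Matrix.head_cons, Matrix.cons_val_two, Matrix.tail_cons,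
      Matrix.cons_val_three, Matrix.cons_val_four]
    push_cast
    ring
  have hS : (∑ i, ∑ j, cplus i * cplus j * min (t i) (t j)
        = ((a:ℝ) + (a:ℝ) * (r:ℝ) - 4) / ((a:ℝ) * ((r:ℝ) * (b':ℝ)))) ∧
      (∑ i, ∑ j, cminus i * cminus j * min (t i) (t j)
        = ((a:ℝ) + (a:ℝ) * (r:ℝ)) / ((a:ℝ) * ((r:ℝ) * (b':ℝ)))) := by
    have o01 : (p:ℝ) * ((r:ℝ) * (b':ℝ)) ≤ (p:ℝ) * ((r:ℝ) * (b':ℝ)) + (r:ℝ) * (b':ℝ) := by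
      nlinarith
    have o23 : (q:ℝ) * (b':ℝ) ≤ (q:ℝ) * (b':ℝ) + (b':ℝ) := by nlinarith
    have o14 : (p:ℝ) * ((r:ℝ) * (b':ℝ)) + (r:ℝ) * (b':ℝ) ≤ (a:ℝ) * ((r:ℝ) * (b':ℝ)) := by
      nlinarith
    have o34 : (q:ℝ) * (b':ℝ) + (b':ℝ) ≤ (a:ℝ) * ((r:ℝ) * (b':ℝ)) := by nlinarith
    rcases hout with hc | hc
    · -- fine batch strictly before coarse batch : t2 ≤ t3 ≤ t0 ≤ t1 ≤ t4
      have hqp : (q:ℝ) + 1 ≤ (r:ℝ) * (p:ℝ) := by exact_mod_cast hc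
      have o30 : (q:ℝ) * (b':ℝ) + (b':ℝ) ≤ (p:ℝ) * ((r:ℝ) * (b':ℝ)) := by nlinarith
      have o20 := o23.trans o30
      have o31 := o30.trans o01
      have o21 := o20.trans o01
      have o04 := o01.trans o14
      have o24 := o21.trans o14
      constructor <;>
      · simp only [hcp_def, hcm_def, ht_def, Fin.sum_univ_five, Matrix.cons_val_zero,
          Matrix.cons_val_one, Matrix.head_cons, Matrix.cons_val_two, Matrix.tail_cons,
          Matrix.cons_val_three, Matrix.cons_val_four, min_self,
          min_eq_left o01, min_eq_right o01, min_eq_left o23, min_eq_right o23,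
          min_eq_left o14, min_eq_right o14, min_eq_left o34, min_eq_right o34,
          min_eq_left o30, min_eq_right o30, min_eq_left o20, min_eq_right o20,
          min_eq_left o31, min_eq_right o31, min_eq_left o21, min_eq_right o21,
          min_eq_left o04, min_eq_right o04, min_eq_left o24, min_eq_right o24]
        field_simp
        ring
    · -- coarse batch strictly before fine batch : t0 ≤ t1 ≤ t2 ≤ t3 ≤ t4
      have hpq : (r:ℝ) * ((p:ℝ) + 1) ≤ (q:ℝ) := by exact_mod_cast hc
      have o12 : (p:ℝ) * ((r:ℝ) * (b':ℝ)) + (r:ℝ) * (b':ℝ) ≤ (q:ℝ) * (b':ℝ) := by nlinarith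
      have o02 := o01.trans o12
      have o13 := o12.trans o23
      have o03 := o02.trans o23
      have o04 := o01.trans o14
      have o24 := o23.trans o34
      constructor <;>
      · simp only [hcp_def, hcm_def, ht_def, Fin.sum_univ_five, Matrix.cons_val_zero,
          Matrix.cons_val_one, Matrix.head_cons, Matrix.cons_val_two, Matrix.tail_cons,
          Matrix.cons_val_three, Matrix.cons_val_four, min_self,
          min_eq_left o01, min_eq_right o01, min_eq_left o23, min_eq_right o23,
          min_eq_left o14, min_eq_right o14, min_eq_left o34, min_eq_right o34,
          min_eq_left o12, min_eq_right o12, min_eq_left o02, min_eq_right o02,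
          min_eq_left o13, min_eq_right o13, min_eq_left o03, min_eq_right o03,
          min_eq_left o04, min_eq_right o04, min_eq_left o24, min_eq_right o24]
        field_simp
        ring
  have hSp_nonneg : 0 ≤ ∑ i, ∑ j, cplus i * cplus j * min (t i) (t j) := by
    rw [hS.1]
    apply div_nonneg _ (by positivity)
    nlinarith
  have hSm_nonneg : 0 ≤ ∑ i, ∑ j, cminus i * cminus j * min (t i) (t j) := by
    rw [hS.2]
    positivity
  obtain ⟨hIp, hEp⟩ := key cplus hSp_nonneg
  obtain ⟨hIm, hEm⟩ := key cminus hSm_nonneg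
  have hrw : (∫ ω, ((B ((p * (r * b') + r * b' : ℕ) : ℝ) ω - B ((p * (r * b') : ℕ) : ℝ) ω)
            / ((r * b' : ℕ) : ℝ) - B ((a * (r * b') : ℕ) : ℝ) ω / ((a * (r * b') : ℕ) : ℝ))
        * ((B ((q * b' + b' : ℕ) : ℝ) ω - B ((q * b' : ℕ) : ℝ) ω) / (b' : ℝ)
            - B ((a * (r * b') : ℕ) : ℝ) ω / ((a * (r * b') : ℕ) : ℝ)) ∂μ)
      = ∫ ω, ((∑ i, cplus i * B (t i) ω) ^ 2 - (∑ i, cminus i * B (t i) ω) ^ 2) / 4 ∂μ :=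
    integral_congr_ae (Filter.Eventually.of_forall hpt)
  rw [hrw, integral_div, integral_sub hIp hIm, hEp, hEm, hS.1, hS.2]
  push_cast
  field_simp
  ring
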